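/- For all k, n ∈ ℕ, ∏_{λ ∈ P(n,k)} a_λ divides ∏_{λ ∈ P(n,k)} b_λ, where P(n,k) is the set of partitions of n with all parts at most k, a_λ = ∏_i i^{m_i(λ)}, and b_λ = ∏_i m_i(λ)!. -/

import Mathlib

open scoped Classical

namespace PartArith

/-- `a_μ = ∏ i^{m_i(μ)}`, the product of the parts of `μ`. -/
def aNum {n : ℕ} (μ : Nat.Partition n) : ℕ := μ.parts.prod

/-- `b_μ = ∏ m_i(μ)!`, the product of the factorials of the multiplicities of the parts. -/
def bNum {n : ℕ} (μ : Nat.Partition n) : ℕ :=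
  ∏ i ∈ μ.parts.toFinset, (μ.parts.count i).factorial

/-- `t_S(n)`, the number of divisors of `n` lying in `S`. -/
noncomputable def tS (S : Set ℕ) (n : ℕ) : ℕ := (n.divisors.filter (· ∈ S)).card

/-- `e_{S,p}(n) = ∑_{d ∣ n, d ∈ S} ν_p(d)`. -/
noncomputable def eS (S : Set ℕ) (p n : ℕ) : ℕ :=
  ∑ d ∈ n.divisors.filter (· ∈ S), d.factorization p

/-- `f_{S,p}(n) = |{(r, j) : r ∈ S, j ≥ 1, r·p^j ∣ n}|` (for `n ≥ 1` this set is finite and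
contained in `divisors n × [1, n]`). -/
noncomputable def fS (S : Set ℕ) (p n : ℕ) : ℕ :=
  ((n.divisors ×ˢ Finset.Icc 1 n).filter fun rj => rj.1 ∈ S ∧ rj.1 * p ^ rj.2 ∣ n).card

/-- `S` is `p`-divisible: `p·r ∈ S` (for `r ≥ 1`) implies `r ∈ S`. -/
def PDivisible (S : Set ℕ) (p : ℕ) : Prop := ∀ r : ℕ, 1 ≤ r → p * r ∈ S → r ∈ S

/-- `S` is `p`-closed: `d ∈ S` implies `p·d ∈ S`. -/
def PClosed (S : Set ℕ) (p : ℕ) : Prop := ∀ d ∈ S, p * d ∈ S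

/-- The number of partitions of `n` with all parts in `S`. -/
noncomputable def pCount (S : Set ℕ) (n : ℕ) : ℕ :=
  Fintype.card {μ : Nat.Partition n // ∀ i ∈ μ.parts, i ∈ S}

/-- `a_{P(n,S)} = ∏_{μ ∈ P(n,S)} a_μ`. -/
noncomputable def aProd (S : Set ℕ) (n : ℕ) : ℕ :=
  ∏ μ : {μ : Nat.Partition n // ∀ i ∈ μ.parts, i ∈ S}, aNum μ.1

/-- `b_{P(n,S)} = ∏_{μ ∈ P(n,S)} b_μ`. -/
noncomputable def bProd (S : Set ℕ) (n : ℕ) : ℕ :=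
  ∏ μ : {μ : Nat.Partition n // ∀ i ∈ μ.parts, i ∈ S}, bNum μ.1


lemma msum_mono {s t : Multiset ℕ} (h : s ≤ t) : s.sum ≤ t.sum := by
  conv_rhs => rw [← tsub_add_cancel_of_le h]
  rw [Multiset.sum_add]; exact Nat.le_add_left _ _

lemma count_mul_le {n : ℕ} (μ : Nat.Partition n) (i : ℕ) : μ.parts.count i * i ≤ n := by
  have h : Multiset.replicate (μ.parts.count i) i ≤ μ.parts :=
    Multiset.le_count_iff_replicate_le.mp le_rfl
  have h2 := msum_mono h
  rwa [Multiset.sum_replicate, smul_eq_mul, μ.parts_sum] at h2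

noncomputable def Ncount (n k i j : ℕ) : ℕ :=
  (Finset.univ.filter
    (fun μ : {μ : Nat.Partition n // ∀ x ∈ μ.parts, x ≤ k} => j ≤ μ.1.parts.count i)).card

noncomputable def removeEquiv (n k i j : ℕ) (hi : 0 < i) (hik : i ≤ k) (hji : j * i ≤ n) :
    {μ : {μ : Nat.Partition n // ∀ x ∈ μ.parts, x ≤ k} // j ≤ μ.1.parts.count i} ≃
      {μ : Nat.Partition (n - j * i) // ∀ x ∈ μ.parts, x ≤ k} where
  toFun μ := by
    have hle : Multiset.replicate j i ≤ μ.1.1.parts :=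
      Multiset.le_count_iff_replicate_le.mp μ.2
    refine ⟨⟨μ.1.1.parts - Multiset.replicate j i, ?_, ?_⟩, ?_⟩
    · intro x hx
      exact μ.1.1.parts_pos (Multiset.mem_of_le (tsub_le_self) hx)
    · have h := tsub_add_cancel_of_le hle
      have h2 : (μ.1.1.parts - Multiset.replicate j i).sum + (Multiset.replicate j i).sum = n := by
        rw [← Multiset.sum_add, h, μ.1.1.parts_sum]
      rw [Multiset.sum_replicate, smul_eq_mul] at h2
      omega
    · intro x hx
      exact μ.1.2 x (Multiset.mem_of_le (tsub_le_self) hx)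
  invFun ν := by
    refine ⟨⟨⟨ν.1.parts + Multiset.replicate j i, ?_, ?_⟩, ?_⟩, ?_⟩
    · intro x hx
      rcases Multiset.mem_add.mp hx with h | h
      · exact ν.1.parts_pos h
      · rwa [Multiset.eq_of_mem_replicate h]
    · rw [Multiset.sum_add, ν.1.parts_sum, Multiset.sum_replicate, smul_eq_mul]
      omega
    · intro x hx
      rcases Multiset.mem_add.mp hx with h | h
      · exact ν.2 x h
      · rw [Multiset.eq_of_mem_replicate h]; exact hik
    · show j ≤ Multiset.count i (ν.1.parts + Multiset.replicate j i)
      rw [Multiset.count_add, Multiset.count_replicate_self]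
      omega
  left_inv μ := by
    have hle : Multiset.replicate j i ≤ μ.1.1.parts :=
      Multiset.le_count_iff_replicate_le.mp μ.2
    ext1; ext1; ext1
    exact tsub_add_cancel_of_le hle
  right_inv ν := by
    ext1; ext1
    simp

lemma Ncount_eq_card (n k i j : ℕ) (hi : 0 < i) (hik : i ≤ k) (hji : j * i ≤ n) :
    Ncount n k i j = Fintype.card {μ : Nat.Partition (n - j * i) // ∀ x ∈ μ.parts, x ≤ k} := by
  rw [Ncount, ← Fintype.card_subtype]
  exact Fintype.card_congr (removeEquiv n k i j hi hik hji)

lemma Ncount_eq_zero (n k i j : ℕ) (hji : n < j * i) : Ncount n k i j = 0 := by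
  rw [Ncount, Finset.card_eq_zero, Finset.filter_eq_empty_iff]
  intro μ _
  simp only [not_le]
  by_contra h
  push_neg at h
  have h1 := count_mul_le μ.1 i
  have h2 : j * i ≤ μ.1.parts.count i * i := Nat.mul_le_mul_right _ h
  omega

lemma Ncount_congr (n k : ℕ) {i j i' j' : ℕ} (hi : 0 < i) (hik : i ≤ k) (hi' : 0 < i')
    (hik' : i' ≤ k) (heq : j * i = j' * i') : Ncount n k i j = Ncount n k i' j' := by
  rcases le_or_gt (j * i) n with h | h
  · rw [Ncount_eq_card n k i j hi hik h, Ncount_eq_card n k i' j' hi' hik' (heq ▸ h), heq]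
  · rw [Ncount_eq_zero n k i j h, Ncount_eq_zero n k i' j' (heq ▸ h)]

/-- the relevant range of parts -/
def Irange (n k : ℕ) : Finset ℕ := (Finset.Icc 1 n).filter (· ≤ k)

lemma mem_Irange {n k : ℕ} (μ : {μ : Nat.Partition n // ∀ x ∈ μ.parts, x ≤ k}) {i : ℕ}
    (h : i ∈ μ.1.parts) : i ∈ Irange n k := by
  have pos : 0 < i := μ.1.parts_pos h
  have hc : 1 ≤ μ.1.parts.count i := Multiset.one_le_count_iff_mem.mpr h
  have h1 := count_mul_le μ.1 i
  have h2 : 1 * i ≤ μ.1.parts.count i * i := Nat.mul_le_mul_right _ hc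
  simp only [Irange, Finset.mem_filter, Finset.mem_Icc]
  exact ⟨⟨pos, by omega⟩, μ.2 i h⟩

lemma count_le_n {n k : ℕ} (μ : {μ : Nat.Partition n // ∀ x ∈ μ.parts, x ≤ k}) {i : ℕ}
    (hi : 0 < i) : μ.1.parts.count i ≤ n := by
  have h1 := count_mul_le μ.1 i
  nlinarith

variable {n k p : ℕ}

lemma aNum_fact (hp : p.Prime) (μ : {μ : Nat.Partition n // ∀ x ∈ μ.parts, x ≤ k}) :
    (aNum μ.1).factorization p
      = ∑ i ∈ Irange n k, μ.1.parts.count i * i.factorization p := by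
  rw [aNum, Finset.prod_multiset_count,
    Nat.factorization_prod (fun i hi => pow_ne_zero _
      (μ.1.parts_pos (Multiset.mem_toFinset.mp hi)).ne')]
  rw [Finsupp.finset_sum_apply]
  rw [Finset.sum_subset (fun i hi => mem_Irange μ (Multiset.mem_toFinset.mp hi))
    (fun i _ hi => by
      simp [Multiset.count_eq_zero.mpr (fun h => hi (Multiset.mem_toFinset.mpr h))])]
  refine Finset.sum_congr rfl fun i _ => ?_
  rw [Nat.factorization_pow]; simp

lemma bNum_fact (hp : p.Prime) (μ : {μ : Nat.Partition n // ∀ x ∈ μ.parts, x ≤ k}) :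
    (bNum μ.1).factorization p
      = ∑ i ∈ Irange n k, ((μ.1.parts.count i).factorial).factorization p := by
  rw [bNum, Nat.factorization_prod (fun i _ => (Nat.factorial_pos _).ne')]
  rw [Finsupp.finset_sum_apply]
  exact Finset.sum_subset (fun i hi => mem_Irange μ (Multiset.mem_toFinset.mp hi))
    (fun i _ hi => by
      simp [Multiset.count_eq_zero.mpr (fun h => hi (Multiset.mem_toFinset.mpr h))])

lemma sum_count (hi : 0 < i) :
    ∑ μ : {μ : Nat.Partition n // ∀ x ∈ μ.parts, x ≤ k}, μ.1.parts.count i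
      = ∑ j ∈ Finset.Icc 1 n, Ncount n k i j := by
  have key : ∀ μ : {μ : Nat.Partition n // ∀ x ∈ μ.parts, x ≤ k},
      μ.1.parts.count i = ∑ j ∈ Finset.Icc 1 n, if j ≤ μ.1.parts.count i then 1 else 0 := by
    intro μ
    rw [← Finset.card_filter]
    have : (Finset.Icc 1 n).filter (fun j => j ≤ μ.1.parts.count i)
        = Finset.Icc 1 (μ.1.parts.count i) := by
      have := count_le_n μ hi
      ext j; simp only [Finset.mem_filter, Finset.mem_Icc]; omega
    rw [this, Nat.card_Icc]; omega
  rw [Finset.sum_congr rfl (fun μ _ => key μ), Finset.sum_comm]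
  refine Finset.sum_congr rfl fun j _ => ?_
  rw [Ncount, Finset.card_filter]

lemma sum_count_div (hi : 0 < i) (q : ℕ) (hq : 0 < q) :
    ∑ μ : {μ : Nat.Partition n // ∀ x ∈ μ.parts, x ≤ k}, μ.1.parts.count i / q
      = ∑ s ∈ Finset.Icc 1 n, Ncount n k i (s * q) := by
  have key : ∀ μ : {μ : Nat.Partition n // ∀ x ∈ μ.parts, x ≤ k},
      μ.1.parts.count i / q
        = ∑ s ∈ Finset.Icc 1 n, if s * q ≤ μ.1.parts.count i then 1 else 0 := by
    intro μ
    rw [← Finset.card_filter]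
    have : (Finset.Icc 1 n).filter (fun s => s * q ≤ μ.1.parts.count i)
        = Finset.Icc 1 (μ.1.parts.count i / q) := by
      have hcn := count_le_n μ hi
      have hd : μ.1.parts.count i / q ≤ n := le_trans (Nat.div_le_self _ _) hcn
      ext s
      simp only [Finset.mem_filter, Finset.mem_Icc]
      constructor
      · rintro ⟨⟨hs1, _⟩, hs3⟩
        exact ⟨hs1, (Nat.le_div_iff_mul_le hq).mpr hs3⟩
      · rintro ⟨hs1, hs3⟩
        exact ⟨⟨hs1, le_trans hs3 hd⟩, (Nat.le_div_iff_mul_le hq).mp hs3⟩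
    rw [this, Nat.card_Icc, Nat.add_sub_cancel]
  rw [Finset.sum_congr rfl (fun μ _ => key μ), Finset.sum_comm]
  refine Finset.sum_congr rfl fun s _ => ?_
  rw [Ncount, Finset.card_filter]

lemma fact_eq_card_filter (hp : p.Prime) {i : ℕ} (h1 : 0 < i) (h2 : i ≤ n) :
    i.factorization p = ((Finset.Icc 1 n).filter (fun t => p ^ t ∣ i)).card := by
  have hlt : i.factorization p < n := lt_of_lt_of_le (Nat.factorization_lt p h1.ne') h2
  have : (Finset.Icc 1 n).filter (fun t => p ^ t ∣ i) = Finset.Icc 1 (i.factorization p) := by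
    ext t
    simp only [Finset.mem_filter, Finset.mem_Icc,
      hp.pow_dvd_iff_le_factorization h1.ne']
    omega
  rw [this, Nat.card_Icc]; omega

lemma factorial_fact_eq (hp : p.Prime) {c : ℕ} (hc : c ≤ n) :
    (c.factorial).factorization p = ∑ t ∈ Finset.Icc 1 n, c / p ^ t := by
  haveI := Fact.mk hp
  rw [Nat.factorization_def _ hp,
    padicValNat_factorial (lt_of_le_of_lt (le_trans (Nat.log_le_self p c) hc) (Nat.lt_succ_self n)),
    Nat.succ_eq_add_one, Finset.Ico_add_one_right_eq_Icc]


lemma aNum_ne_zero {n : ℕ} (μ : Nat.Partition n) : aNum μ ≠ 0 :=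
  Multiset.prod_ne_zero (fun h => by simpa using μ.parts_pos h)

lemma bNum_ne_zero {n : ℕ} (μ : Nat.Partition n) : bNum μ ≠ 0 :=
  Finset.prod_ne_zero_iff.mpr (fun i _ => (Nat.factorial_pos _).ne')

lemma mem_Irange_iff {n k i : ℕ} : i ∈ Irange n k ↔ 1 ≤ i ∧ i ≤ n ∧ i ≤ k := by
  simp only [Irange, Finset.mem_filter, Finset.mem_Icc]; tauto

variable {n k p : ℕ}

lemma key_le (hp : p.Prime) :
    (∏ μ : {μ : Nat.Partition n // ∀ x ∈ μ.parts, x ≤ k}, aNum μ.1).factorization p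
      ≤ (∏ μ : {μ : Nat.Partition n // ∀ x ∈ μ.parts, x ≤ k}, bNum μ.1).factorization p := by
  set F : ℕ × ℕ → ℕ := fun y => ∑ s ∈ Finset.Icc 1 n, Ncount n k y.1 (s * p ^ y.2) with hF
  -- LHS computation
  have hL : (∏ μ : {μ : Nat.Partition n // ∀ x ∈ μ.parts, x ≤ k}, aNum μ.1).factorization p
      = ∑ i ∈ Irange n k, ∑ t ∈ (Finset.Icc 1 n).filter (fun t => p ^ t ∣ i),
          ∑ j ∈ Finset.Icc 1 n, Ncount n k i j := by
    rw [Nat.factorization_prod (fun μ _ => aNum_ne_zero μ.1), Finsupp.finset_sum_apply]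
    rw [Finset.sum_congr rfl (fun μ _ => aNum_fact hp μ), Finset.sum_comm]
    refine Finset.sum_congr rfl fun i hi => ?_
    obtain ⟨hi1, hi2, hi3⟩ := mem_Irange_iff.mp hi
    rw [← Finset.sum_mul, sum_count hi1, fact_eq_card_filter hp hi1 hi2,
      mul_comm, Finset.card_eq_sum_ones, Finset.sum_mul]
    simp
  -- RHS computation
  have hR : (∏ μ : {μ : Nat.Partition n // ∀ x ∈ μ.parts, x ≤ k}, bNum μ.1).factorization p
      = ∑ i ∈ Irange n k, ∑ t ∈ Finset.Icc 1 n, ∑ s ∈ Finset.Icc 1 n,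
          Ncount n k i (s * p ^ t) := by
    rw [Nat.factorization_prod (fun μ _ => bNum_ne_zero μ.1), Finsupp.finset_sum_apply]
    rw [Finset.sum_congr rfl (fun μ _ => bNum_fact hp μ), Finset.sum_comm]
    refine Finset.sum_congr rfl fun i hi => ?_
    obtain ⟨hi1, hi2, hi3⟩ := mem_Irange_iff.mp hi
    have : ∀ μ : {μ : Nat.Partition n // ∀ x ∈ μ.parts, x ≤ k},
        ((μ.1.parts.count i).factorial).factorization p
          = ∑ t ∈ Finset.Icc 1 n, μ.1.parts.count i / p ^ t :=
      fun μ => factorial_fact_eq hp (count_le_n μ hi1)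
    rw [Finset.sum_congr rfl (fun μ _ => this μ), Finset.sum_comm]
    exact Finset.sum_congr rfl fun t _ =>
      sum_count_div hi1 (p ^ t) (pow_pos hp.pos t)
  rw [hL, hR]
  -- rewrite LHS terms through the division map
  have hL2 : ∀ i ∈ Irange n k, ∀ t ∈ (Finset.Icc 1 n).filter (fun t => p ^ t ∣ i),
      (∑ j ∈ Finset.Icc 1 n, Ncount n k i j) = F (i / p ^ t, t) := by
    intro i hi t ht
    obtain ⟨hi1, hi2, hi3⟩ := mem_Irange_iff.mp hi
    obtain ⟨-, hdvd⟩ := Finset.mem_filter.mp ht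
    have hq : 0 < p ^ t := pow_pos hp.pos t
    have hr1 : 0 < i / p ^ t := Nat.div_pos (Nat.le_of_dvd hi1 hdvd) hq
    have hr3 : i / p ^ t ≤ k := le_trans (Nat.div_le_self _ _) hi3
    refine Finset.sum_congr rfl fun j _ => ?_
    refine Ncount_congr n k hi1 hi3 hr1 hr3 ?_
    rw [mul_assoc, mul_comm (p ^ t), Nat.div_mul_cancel hdvd]
  rw [Finset.sum_congr rfl (fun i hi => Finset.sum_congr rfl (fun t ht => hL2 i hi t ht))]
  set A : Finset (ℕ × ℕ) := (Irange n k ×ˢ Finset.Icc 1 n).filter (fun x => p ^ x.2 ∣ x.1)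
    with hA
  set φ : ℕ × ℕ → ℕ × ℕ := fun x => (x.1 / p ^ x.2, x.2) with hφ
  have step1 : ∑ i ∈ Irange n k, ∑ t ∈ (Finset.Icc 1 n).filter (fun t => p ^ t ∣ i),
      F (i / p ^ t, t) = ∑ x ∈ A, F (φ x) := by
    rw [hA, Finset.sum_filter, Finset.sum_product]
    refine Finset.sum_congr rfl fun i _ => ?_
    rw [← Finset.sum_filter]
  have hinj : ∀ x ∈ A, ∀ y ∈ A, φ x = φ y → x = y := by
    intro x hx y hy hxy
    obtain ⟨-, hdx⟩ := Finset.mem_filter.mp hx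
    obtain ⟨-, hdy⟩ := Finset.mem_filter.mp hy
    simp only [hφ, Prod.mk.injEq] at hxy
    obtain ⟨h1, h2⟩ := hxy
    have : x.1 = y.1 := by
      rw [← Nat.div_mul_cancel hdx, ← Nat.div_mul_cancel hdy, h1, h2]
    exact Prod.ext this h2
  have himg : A.image φ ⊆ Irange n k ×ˢ Finset.Icc 1 n := by
    intro y hy
    obtain ⟨x, hx, rfl⟩ := Finset.mem_image.mp hy
    obtain ⟨hxm, hdx⟩ := Finset.mem_filter.mp hx
    obtain ⟨hx1, hx2⟩ := Finset.mem_product.mp hxm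
    obtain ⟨h1, h2, h3⟩ := mem_Irange_iff.mp hx1
    have hq : 0 < p ^ x.2 := pow_pos hp.pos x.2
    refine Finset.mem_product.mpr ⟨mem_Irange_iff.mpr ⟨?_, ?_, ?_⟩, hx2⟩
    · exact Nat.div_pos (Nat.le_of_dvd h1 hdx) hq
    · exact le_trans (Nat.div_le_self _ _) h2
    · exact le_trans (Nat.div_le_self _ _) h3
  have step2 : ∑ x ∈ A, F (φ x) ≤ ∑ y ∈ Irange n k ×ˢ Finset.Icc 1 n, F y := by
    rw [← Finset.sum_image hinj]
    exact Finset.sum_le_sum_of_subset himg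
  have step3 : ∑ y ∈ Irange n k ×ˢ Finset.Icc 1 n, F y
      = ∑ i ∈ Irange n k, ∑ t ∈ Finset.Icc 1 n, ∑ s ∈ Finset.Icc 1 n,
          Ncount n k i (s * p ^ t) := by rw [Finset.sum_product]
  rw [step1, ← step3]
  exact step2


/-- **Corollary 4.5.** For all `k, n ∈ ℕ`, `a_{P(n,k)}` divides `b_{P(n,k)}`, where `P(n,k)` is
the set of partitions of `n` with all parts at most `k`. -/
theorem aProd_dvd_bProd_bounded (k n : ℕ) :
    (∏ μ : {μ : Nat.Partition n // ∀ i ∈ μ.parts, i ≤ k}, aNum μ.1) ∣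
      ∏ μ : {μ : Nat.Partition n // ∀ i ∈ μ.parts, i ≤ k}, bNum μ.1 := by
  have ha : (∏ μ : {μ : Nat.Partition n // ∀ i ∈ μ.parts, i ≤ k}, aNum μ.1) ≠ 0 :=
    Finset.prod_ne_zero_iff.mpr (fun μ _ => aNum_ne_zero μ.1)
  have hb : (∏ μ : {μ : Nat.Partition n // ∀ i ∈ μ.parts, i ≤ k}, bNum μ.1) ≠ 0 :=
    Finset.prod_ne_zero_iff.mpr (fun μ _ => bNum_ne_zero μ.1)
  rw [← Nat.factorization_le_iff_dvd ha hb]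
  intro p
  rcases em p.Prime with hp | hp
  · exact key_le hp
  · simp [Nat.factorization_eq_zero_of_not_prime _ hp]

end PartArith
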